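/- Let (V,E,μ) be a measure graph (countable graph with a weight μ: V → (0,∞) extended by summation to a measure on subsets) and v,w ∈ V. Then the infimum over all subsets A ⊆ V of the discrete separating ratio μ(A)/disc-width_{v,w}(A) equals the infimum over all discrete separating sets A between v and w of μ(A). -/

import Mathlib

open scoped ENNReal

noncomputable section

namespace DiscPaper

variable {V : Type*}

/-- Number of distinct vertices of the walk `c` lying in `A`. -/
def interCount (G : SimpleGraph V) {v w : V} (c : G.Walk v w) (A : Set V) : ℕ :=
  ({q | q ∈ c.support} ∩ A).ncard

/-- Discrete width of `A` between `v` and `w`: infimum over walks from `v` to `w`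
of the number of vertices of the walk lying in `A` (`⊤` if there is no walk). -/
def discWidth (G : SimpleGraph V) (v w : V) (A : Set V) : ℝ≥0∞ :=
  ⨅ c : G.Walk v w, (interCount G c A : ℝ≥0∞)

/-- `A` is a discrete separating set between `v` and `w`: every walk from `v`
to `w` meets `A`. -/
def IsDiscSep (G : SimpleGraph V) (v w : V) (A : Set V) : Prop :=
  ∀ c : G.Walk v w, ∃ q ∈ c.support, q ∈ A

/-- The discrete position function: minimum, over walks `c` from `v` to `w`
passing through `z`, of the number of points of `A` met along `c` up to and
including the first occurrence of `z` (`⊤` if no walk passes through `z`). -/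
def posA (G : SimpleGraph V) (v w : V) (A : Set V) (z : V) : ℝ≥0∞ :=
  ⨅ (c : G.Walk v w) (i : Fin c.support.length) (_ : c.support.get i = z),
    (({q | q ∈ c.support.take (↑i + 1)} ∩ A).ncard : ℝ≥0∞)

/-- The measure of a set of vertices, given a weight function on vertices. -/
def muSet (μ : V → ℝ≥0∞) (A : Set V) : ℝ≥0∞ := ∑' q : A, μ q

/-- Discrete separating ratio, with the conventions that it is `⊤` when the
width is `0`, and `0` when the width is `⊤` (no walk exists). -/
def discSR (G : SimpleGraph V) (v w : V) (μ : V → ℝ≥0∞) (A : Set V) : ℝ≥0∞ :=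
  if discWidth G v w A = 0 then ⊤ else muSet μ A / discWidth G v w A

/-- A slim separating set: a discrete separating set such that every point of
`A` is the first intersection point with `A` of some walk from `v` to `w`. -/
def Slim (G : SimpleGraph V) (v w : V) (A : Set V) : Prop :=
  IsDiscSep G v w A ∧
    ∀ z ∈ A, ∃ (c : G.Walk v w) (i : Fin c.support.length),
      c.support.get i = z ∧ ∀ j : Fin c.support.length, j < i → c.support.get j ∉ A

end DiscPaper

end

noncomputable section Stmt15Aux

namespace Stmt15Aux

open DiscPaper
open scoped Classical

variable {V : Type*} {G : SimpleGraph V} {A : Set V}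

lemma finite_inter {v w : V} (c : G.Walk v w) : ({q | q ∈ c.support} ∩ A).Finite :=
  (c.support.finite_toSet).inter_of_left A

lemma one_le_interCount {v w : V} {c : G.Walk v w} (h : ∃ q ∈ c.support, q ∈ A) :
    1 ≤ interCount G c A := by
  obtain ⟨q, hq, hqA⟩ := h
  exact (Set.ncard_pos (finite_inter c)).2 ⟨q, hq, hqA⟩

lemma interCount_concat_le {v u u' : V} (c : G.Walk v u) (h : G.Adj u u') :
    interCount G (c.concat h) A ≤ interCount G c A + (if u' ∈ A then 1 else 0) := by
  classical
  have hs : {q | q ∈ (c.concat h).support} = {q | q ∈ c.support} ∪ {u'} := by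
    ext q
    simp [SimpleGraph.Walk.support_concat, List.concat_eq_append, or_comm]
  unfold interCount
  rw [hs, Set.union_inter_distrib_right]
  refine le_trans (Set.ncard_union_le _ _) ?_
  have h2 : (({u'} : Set V) ∩ A).ncard ≤ if u' ∈ A then 1 else 0 := by
    by_cases hu : u' ∈ A
    · rw [if_pos hu, Set.inter_eq_left.2 (by simpa using hu), Set.ncard_singleton]
    · rw [if_neg hu, Set.singleton_inter_eq_empty.2 hu, Set.ncard_empty]
  exact add_le_add_right h2 _

/-- `fN z` = min over walks `v → z` of the number of `A`-points met. -/
def fN (G : SimpleGraph V) (A : Set V) (v z : V) : ℕ∞ :=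
  ⨅ c : G.Walk v z, (interCount G c A : ℕ∞)

lemma fN_step {v u u' : V} (h : G.Adj u u') :
    fN G A v u' ≤ fN G A v u + (if u' ∈ A then 1 else 0) := by
  classical
  rcases eq_or_ne (fN G A v u) ⊤ with ht | ht
  · rw [ht, top_add]; exact le_top
  · have h1 : fN G A v u < fN G A v u + 1 := (ENat.lt_add_one_iff ht).2 le_rfl
    obtain ⟨c, hc⟩ := iInf_lt_iff.1 h1
    have hc' : (interCount G c A : ℕ∞) ≤ fN G A v u := (ENat.lt_add_one_iff ht).1 hc
    calc fN G A v u' ≤ (interCount G (c.concat h) A : ℕ∞) := iInf_le _ _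
      _ ≤ (interCount G c A : ℕ∞) + (if u' ∈ A then 1 else 0) := by
          have h3 := interCount_concat_le (A := A) c h
          by_cases hu : u' ∈ A
          · rw [if_pos hu]; rw [if_pos hu] at h3; exact_mod_cast h3
          · rw [if_neg hu]; rw [if_neg hu] at h3; exact_mod_cast h3
      _ ≤ fN G A v u + (if u' ∈ A then 1 else 0) := add_le_add_left hc' _

lemma fN_self_le (v : V) : fN G A v v ≤ (if v ∈ A then 1 else 0 : ℕ∞) := by
  classical
  refine le_trans (iInf_le _ SimpleGraph.Walk.nil) ?_
  have : interCount G (SimpleGraph.Walk.nil : G.Walk v v) A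
      = (({v} : Set V) ∩ A).ncard := by
    unfold interCount
    congr 1
    ext q; simp
  rw [this]
  by_cases hv : v ∈ A
  · rw [if_pos hv, Set.inter_eq_left.2 (by simpa using hv), Set.ncard_singleton]
    exact_mod_cast le_rfl
  · rw [if_neg hv, Set.singleton_inter_eq_empty.2 hv, Set.ncard_empty]
    exact_mod_cast le_rfl

/-- Discrete intermediate value theorem along a walk. -/
lemma exists_level {v w : V} (i : ℕ) :
    ∀ {u : V} (c : G.Walk u w),
      (fN G A v u < (i : ℕ∞) ∨ (fN G A v u = (i : ℕ∞) ∧ u ∈ A)) →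
      (i : ℕ∞) ≤ fN G A v w →
      ∃ z ∈ c.support, z ∈ A ∧ fN G A v z = (i : ℕ∞) := by
  intro u c
  induction c with
  | nil =>
      intro hu hw
      rcases hu with hlt | ⟨heq, hA⟩
      · exact absurd (lt_of_le_of_lt hw hlt) (lt_irrefl _)
      · exact ⟨_, by simp, hA, heq⟩
  | @cons a b w' hadj c' ih =>
      intro hu hw
      rcases hu with hlt | ⟨heq, hA⟩
      · by_cases hb : fN G A v b < (i : ℕ∞)
        · obtain ⟨z, hz, hzA, hze⟩ := ih (Or.inl hb) hw
          exact ⟨z, by simp [hz], hzA, hze⟩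
        · push_neg at hb
          by_cases hbA : b ∈ A
          · have h1 : fN G A v b ≤ fN G A v a + 1 := by
              have := fN_step (A := A) (v := v) hadj
              rwa [if_pos hbA] at this
            have h2 : fN G A v a + 1 ≤ (i : ℕ∞) := Order.add_one_le_of_lt hlt
            have heq' : fN G A v b = (i : ℕ∞) := le_antisymm (h1.trans h2) hb
            obtain ⟨z, hz, hzA, hze⟩ := ih (Or.inr ⟨heq', hbA⟩) hw
            exact ⟨z, by simp [hz], hzA, hze⟩
          · have h1 : fN G A v b ≤ fN G A v a := by
              have := fN_step (A := A) (v := v) hadj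
              rwa [if_neg hbA, add_zero] at this
            exact absurd (lt_of_le_of_lt h1 hlt) (not_lt.2 hb)
      · exact ⟨a, by simp, hA, heq⟩

end Stmt15Aux

end Stmt15Aux

theorem stmt15 {V : Type*} [Countable V] (G : SimpleGraph V) (v w : V)
    (μ : V → ℝ≥0∞) (hpos : ∀ q, 0 < μ q) (hfin : ∀ q, μ q ≠ ⊤) :
    (⨅ A : Set V, DiscPaper.discSR G v w μ A) =
      ⨅ (A : Set V) (_ : DiscPaper.IsDiscSep G v w A), DiscPaper.muSet μ A := by
  classical
  open DiscPaper Stmt15Aux in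
  apply le_antisymm
  · refine le_iInf fun A => le_iInf fun hA => le_trans (iInf_le _ A) ?_
    have hw1 : (1 : ℝ≥0∞) ≤ discWidth G v w A := by
      refine le_iInf fun c => ?_
      exact_mod_cast Nat.one_le_cast.2 (one_le_interCount (hA c))
    have hne : discWidth G v w A ≠ 0 := by
      intro h0; rw [h0] at hw1; simp at hw1
    rw [discSR, if_neg hne]
    calc muSet μ A / discWidth G v w A ≤ muSet μ A / 1 :=
          ENNReal.div_le_div_left hw1 _
      _ = muSet μ A := by rw [div_one]
  · refine le_iInf fun A => ?_
    rcases eq_or_ne (discWidth G v w A) 0 with h0 | h0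
    · rw [discSR, if_pos h0]; exact le_top
    rcases eq_or_ne (discWidth G v w A) ⊤ with htop | htop
    · have hempty : IsEmpty (G.Walk v w) := by
        by_contra h
        rw [not_isEmpty_iff] at h
        obtain ⟨c⟩ := h
        have h1 : discWidth G v w A ≤ (interCount G c A : ℝ≥0∞) := iInf_le _ c
        rw [htop] at h1
        exact ENNReal.natCast_ne_top _ (top_le_iff.1 h1)
      have hsep : IsDiscSep G v w (∅ : Set V) := fun c => (hempty.false c).elim
      have hmu : muSet μ (∅ : Set V) = 0 := by simp [muSet]
      calc (⨅ (A' : Set V) (_ : IsDiscSep G v w A'), muSet μ A')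
            ≤ muSet μ (∅ : Set V) := iInf₂_le _ hsep
        _ = 0 := hmu
        _ ≤ discSR G v w μ A := zero_le
    · -- main case: 0 < width < ⊤
      have hne : Nonempty (G.Walk v w) := by
        by_contra h
        rw [not_nonempty_iff] at h
        exact htop (iInf_of_empty _)
      have hS : (Set.range fun c : G.Walk v w => interCount G c A).Nonempty :=
        Set.range_nonempty _
      set n := sInf (Set.range fun c : G.Walk v w => interCount G c A) with hn
      obtain ⟨c₀, hc₀⟩ := Nat.sInf_mem hS
      have hmin : ∀ c : G.Walk v w, n ≤ interCount G c A := fun c => Nat.sInf_le ⟨c, rfl⟩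
      have hc₀' : interCount G c₀ A = n := hc₀
      have hkn : discWidth G v w A = (n : ℝ≥0∞) := by
        refine le_antisymm ((iInf_le _ c₀).trans (by rw [hc₀'])) (le_iInf fun c => ?_)
        exact_mod_cast hmin c
      have hn1 : 1 ≤ n := by
        rcases Nat.eq_zero_or_pos n with h | h
        · exact absurd (by rw [hkn, h, Nat.cast_zero]) h0
        · exact h
      have hfw : (n : ℕ∞) ≤ fN G A v w := by
        refine le_iInf fun c => ?_
        exact_mod_cast hmin c
      set B : ℕ → Set V := fun i => {z ∈ A | fN G A v z = (i : ℕ∞)} with hB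
      -- each B i (1 ≤ i ≤ n) is separating
      have hsep : ∀ i, 1 ≤ i → i ≤ n → IsDiscSep G v w (B i) := by
        intro i h1 h2 c
        have hstart : fN G A v v < (i : ℕ∞) ∨ (fN G A v v = (i : ℕ∞) ∧ v ∈ A) := by
          by_cases hv : fN G A v v < (i : ℕ∞)
          · exact Or.inl hv
          · push_neg at hv
            have hub : fN G A v v ≤ (if v ∈ A then 1 else 0 : ℕ∞) := fN_self_le v
            have hvA : v ∈ A := by
              by_contra hvA
              rw [if_neg hvA] at hub
              have : (i : ℕ∞) ≤ 0 := hv.trans hub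
              have hi1 : (1 : ℕ∞) ≤ (i : ℕ∞) := by exact_mod_cast h1
              simp at this
              rw [this] at hi1
              simp at hi1
            rw [if_pos hvA] at hub
            have hi1 : (1 : ℕ∞) ≤ (i : ℕ∞) := by exact_mod_cast h1
            exact Or.inr ⟨le_antisymm (hub.trans hi1) hv, hvA⟩
        have hiw : (i : ℕ∞) ≤ fN G A v w := le_trans (by exact_mod_cast h2) hfw
        obtain ⟨z, hz, hzA, hze⟩ := exists_level i c hstart hiw
        exact ⟨z, hz, hzA, hze⟩
      -- measure estimate
      have hrep : ∀ C : Set V, muSet μ C = ∑' x : V, C.indicator μ x :=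
        fun C => tsum_subtype C μ
      have hpt : ∀ x : V, (∑ i ∈ Finset.Icc 1 n, (B i).indicator μ x)
          ≤ A.indicator μ x := by
        intro x
        by_cases hx : x ∈ A
        · by_cases hfx : fN G A v x = ⊤
          · have hz : ∀ i ∈ Finset.Icc 1 n, (B i).indicator μ x = 0 := by
              intro i _
              apply Set.indicator_of_notMem
              intro hxB
              exact absurd hxB.2 (hfx ▸ (ENat.top_ne_coe _))
            rw [Finset.sum_eq_zero hz]
            exact zero_le
          · set j := (fN G A v x).toNat with hj
            have hjx : fN G A v x = (j : ℕ∞) := (ENat.coe_toNat hfx).symm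
            have heach : ∀ i ∈ Finset.Icc 1 n,
                (B i).indicator μ x = if i = j then μ x else 0 := by
              intro i _
              by_cases hij : i = j
              · rw [if_pos hij]
                apply Set.indicator_of_mem
                exact ⟨hx, by rw [hjx, hij]⟩
              · rw [if_neg hij]
                apply Set.indicator_of_notMem
                intro hxB
                apply hij
                have := hxB.2
                rw [hjx] at this
                exact_mod_cast this.symm
            rw [Finset.sum_congr rfl heach, Finset.sum_ite_eq']
            rw [Set.indicator_of_mem hx]
            split
            · exact le_refl _
            · exact zero_le
        · have hz : ∀ i ∈ Finset.Icc 1 n, (B i).indicator μ x = 0 := by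
            intro i _
            exact Set.indicator_of_notMem (fun hxB => hx hxB.1) μ
          rw [Finset.sum_eq_zero hz]
          exact zero_le
      have hsum : (∑ i ∈ Finset.Icc 1 n, muSet μ (B i)) ≤ muSet μ A := by
        calc (∑ i ∈ Finset.Icc 1 n, muSet μ (B i))
            = ∑ i ∈ Finset.Icc 1 n, ∑' x : V, (B i).indicator μ x := by
              exact Finset.sum_congr rfl fun i _ => hrep (B i)
          _ = ∑' x : V, ∑ i ∈ Finset.Icc 1 n, (B i).indicator μ x :=
              (Summable.tsum_finsetSum fun i _ => ENNReal.summable).symm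
          _ ≤ ∑' x : V, A.indicator μ x := ENNReal.tsum_le_tsum hpt
          _ = muSet μ A := (hrep A).symm
      obtain ⟨i₀, hi₀, hmin'⟩ := Finset.exists_min_image (Finset.Icc 1 n)
        (fun i => muSet μ (B i)) ⟨1, by simp [hn1]⟩
      rw [Finset.mem_Icc] at hi₀
      have hcard : (Finset.Icc 1 n).card = n := by rw [Nat.card_Icc]; omega
      have hmul : muSet μ (B i₀) * (n : ℝ≥0∞) ≤ muSet μ A := by
        calc muSet μ (B i₀) * (n : ℝ≥0∞) = (Finset.Icc 1 n).card • muSet μ (B i₀) := by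
              rw [hcard, nsmul_eq_mul, mul_comm]
          _ ≤ ∑ i ∈ Finset.Icc 1 n, muSet μ (B i) :=
              Finset.card_nsmul_le_sum _ _ _ (fun i hi => hmin' i hi)
          _ ≤ muSet μ A := hsum
      have hn0 : (n : ℝ≥0∞) ≠ 0 := Nat.cast_ne_zero.2 (by omega)
      have hfinal : muSet μ (B i₀) ≤ muSet μ A / (n : ℝ≥0∞) :=
        (ENNReal.le_div_iff_mul_le (Or.inl hn0)
          (Or.inl (ENNReal.natCast_ne_top _))).2 hmul
      calc (⨅ (A' : Set V) (_ : IsDiscSep G v w A'), muSet μ A')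
            ≤ muSet μ (B i₀) := iInf₂_le _ (hsep i₀ hi₀.1 hi₀.2)
        _ ≤ muSet μ A / (n : ℝ≥0∞) := hfinal
        _ = discSR G v w μ A := by rw [discSR, if_neg h0, hkn]
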